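/- In every step of the erase process on s+t+1 vertices, the quantity s_i = f_i + 2 c_i strictly increases: s_i ≥ s_{i−1} + 1 for every i, where f_i and c_i denote the number of hyperedges and the number of connected components (counting isolated vertices) of the auxiliary hyperforest H_i. Equivalently, for each step there is a nonnegative integer λ and a vector v ∈ {(1,0), (1,1), (0,1), (−1,1)} with (f_i, c_i) = (f_{i−1}, c_{i−1}) + v + (λ, 0). -/

import Mathlib

open SimpleGraph
/-- The vertex sets of the connected components of the subgraph of `G` induced on
`F`, viewed as subsets of `V`. -/
def hyperComps {V : Type*} (G : SimpleGraph V) (F : Set V) : Set (Set V) :=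
  {C | ∃ cc : (G.induce F).ConnectedComponent, C = Subtype.val '' cc.supp}

/-- The edge-operation: the unique hyperedge `F` containing both endpoints of the
erased edge `e` is replaced by the connected components of size `> 1` of the induced
subgraph of the new graph `G'` on `F`. -/
def edgeOp {V : Type*} (G' : SimpleGraph V) (e : Sym2 V) (H : Set (Set V)) :
    Set (Set V) :=
  {F ∈ H | ¬ ∀ x ∈ e, x ∈ F} ∪
    ⋃ F ∈ {F ∈ H | ∀ x ∈ e, x ∈ F}, {C ∈ hyperComps G' F | 1 < C.ncard}

/-- The vertex-operation: every hyperedge `F` containing the closed vertex `v` is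
replaced by the sets `F₁ ∪ {v}, …, F_h ∪ {v}` where `F₁, …, F_h` are the connected
components of `G'[F ∖ {v}]`. -/
def vertexOp {V : Type*} (G' : SimpleGraph V) (v : V) (H : Set (Set V)) :
    Set (Set V) :=
  {F ∈ H | v ∉ F} ∪
    ⋃ F ∈ {F ∈ H | v ∈ F}, (fun C => C ∪ {v}) '' hyperComps G' (F \ {v})

/-- One step of the hyperforest update: the edge-operation for the erased edge `e`,
followed by the vertex-operations for the closed vertex `v`. -/
def hstep {V : Type*} (G' : SimpleGraph V) (e : Sym2 V) (v : V) (H : Set (Set V)) :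
    Set (Set V) :=
  vertexOp G' v (edgeOp G' e H)

/-- The initial hypergraph `H₀`: one hyperedge per connected component of `G`
of size at least two. -/
def initialHyper {V : Type*} (G : SimpleGraph V) : Set (Set V) :=
  {C | (∃ cc : G.ConnectedComponent, C = cc.supp) ∧ 1 < C.ncard}

/-- The graph associated with a hypergraph `H`: two distinct vertices are adjacent
iff they lie in a common hyperedge. Its connected components (including isolated
vertices) are the connected components of `H`. -/
def hyperGraphOf {V : Type*} (H : Set (Set V)) : SimpleGraph V :=
  SimpleGraph.fromRel fun u v => ∃ F ∈ H, u ∈ F ∧ v ∈ F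

section RIn
variable {V : Type*} {G G' : SimpleGraph V} {F F' C : Set V} {u v : V}

/-- Reachability within a set `F`. -/
def RIn (G : SimpleGraph V) (F : Set V) : V → V → Prop :=
  Relation.ReflTransGen (fun a b => G.Adj a b ∧ a ∈ F ∧ b ∈ F)

lemma RIn.refl : RIn G F u u := Relation.ReflTransGen.refl

lemma RIn.symm (h : RIn G F u v) : RIn G F v u := by
  induction h with
  | refl => exact RIn.refl
  | tail _ h ih => exact Relation.ReflTransGen.head ⟨h.1.symm, h.2.2, h.2.1⟩ ih

lemma RIn.trans (h : RIn G F u v) (h' : RIn G F v u) : RIn G F u u :=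
  Relation.ReflTransGen.trans h h'

lemma RIn.mono_set (hFF : F ⊆ F') (h : RIn G F u v) : RIn G F' u v := by
  induction h with
  | refl => exact RIn.refl
  | tail _ h ih => exact ih.tail ⟨h.1, hFF h.2.1, hFF h.2.2⟩

lemma RIn.mono_graph (hadj : ∀ a b, G.Adj a b → a ∈ F → b ∈ F → G'.Adj a b)
    (h : RIn G F u v) : RIn G' F u v := by
  induction h with
  | refl => exact RIn.refl
  | tail _ h ih => exact ih.tail ⟨hadj _ _ h.1 h.2.1 h.2.2, h.2.1, h.2.2⟩

lemma RIn.mem_of_ne (h : RIn G F u v) (hne : u ≠ v) : u ∈ F ∧ v ∈ F := by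
  induction h with
  | refl => exact absurd rfl hne
  | @tail b _ hr h ih =>
    refine ⟨?_, h.2.2⟩
    by_cases hub : u = b
    · exact hub ▸ h.2.1
    · exact (ih hub).1

lemma RIn.reachable (h : RIn G F u v) : G.Reachable u v := by
  induction h with
  | refl => exact Reachable.refl _
  | tail _ h ih => exact ih.trans h.1.reachable

end RIn

section Comps
variable {V : Type*} {G G' : SimpleGraph V} {F C C' : Set V} {u v : V}

lemma induce_to_rin {u v : F} (h : (G.induce F).Reachable u v) : RIn G F (u : V) (v : V) := by
  obtain ⟨p⟩ := h
  induction p with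
  | nil => exact RIn.refl
  | @cons a b c h p ih =>
    refine Relation.ReflTransGen.head ⟨?_, a.2, b.2⟩ ih
    simpa using h

lemma rin_to_induce (h : RIn G F u v) :
    ∀ (hu : u ∈ F) (hv : v ∈ F), (G.induce F).Reachable ⟨u, hu⟩ ⟨v, hv⟩ := by
  induction h with
  | refl => intro hu hv; rfl
  | @tail b c hr h ih =>
    intro hu hv
    refine (ih hu h.2.1).trans ?_
    exact SimpleGraph.Adj.reachable (by simpa using h.1)

lemma hyperComps_subset (hC : C ∈ hyperComps G F) : C ⊆ F := by
  obtain ⟨cc, rfl⟩ := hC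
  rintro x ⟨y, _, rfl⟩; exact y.2

lemma hyperComps_nonempty (hC : C ∈ hyperComps G F) : C.Nonempty := by
  obtain ⟨cc, rfl⟩ := hC
  obtain ⟨x, hx⟩ := cc.exists_rep
  exact ⟨x, x, by rw [SimpleGraph.ConnectedComponent.mem_supp_iff]; exact hx, rfl⟩

lemma mem_comp_iff (hC : C ∈ hyperComps G F) (hu : u ∈ C) (hvF : v ∈ F) :
    v ∈ C ↔ RIn G F u v := by
  obtain ⟨cc, rfl⟩ := hC
  obtain ⟨⟨u, huF⟩, husupp, rfl⟩ := hu
  rw [SimpleGraph.ConnectedComponent.mem_supp_iff] at husupp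
  constructor
  · rintro ⟨⟨v', hv'F⟩, hvsupp, rfl⟩
    rw [SimpleGraph.ConnectedComponent.mem_supp_iff] at hvsupp
    have : (G.induce F).Reachable ⟨u, huF⟩ ⟨v', hv'F⟩ := by
      rw [← SimpleGraph.ConnectedComponent.eq, husupp, hvsupp]
    exact induce_to_rin this
  · intro h
    refine ⟨⟨v, hvF⟩, ?_, rfl⟩
    rw [SimpleGraph.ConnectedComponent.mem_supp_iff, ← husupp,
      SimpleGraph.ConnectedComponent.eq]
    exact (rin_to_induce h huF hvF).symm

lemma mem_hyperComps_self (hv : v ∈ F) : ∃ C ∈ hyperComps G F, v ∈ C := by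
  refine ⟨_, ⟨(G.induce F).connectedComponentMk ⟨v, hv⟩, rfl⟩, ⟨v, hv⟩, ?_, rfl⟩
  simp [SimpleGraph.ConnectedComponent.mem_supp_iff]

lemma hyperComps_eq_of_mem (hC : C ∈ hyperComps G F) (hC' : C' ∈ hyperComps G F)
    (hu : u ∈ C) (hu' : u ∈ C') : C = C' := by
  obtain ⟨cc, rfl⟩ := hC
  obtain ⟨cc', rfl⟩ := hC'
  obtain ⟨x, hx, hxe⟩ := hu
  obtain ⟨x', hx', hxe'⟩ := hu'
  have : x = x' := Subtype.ext (hxe.trans hxe'.symm)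
  subst this
  rw [SimpleGraph.ConnectedComponent.mem_supp_iff] at hx hx'
  rw [← hx, hx']

lemma adj_same_comp (hC : C ∈ hyperComps G F) (hu : u ∈ C) (hadj : G.Adj u v)
    (hv : v ∈ F) : v ∈ C :=
  (mem_comp_iff hC hu hv).mpr
    (Relation.ReflTransGen.single ⟨hadj, hyperComps_subset hC hu, hv⟩)

lemma rin_within (hC : C ∈ hyperComps G F) (hu : u ∈ C) (hv : v ∈ C) :
    RIn G C u v := by
  have h : RIn G F u v := (mem_comp_iff hC hu (hyperComps_subset hC hv)).mp hv
  clear hv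
  induction h with
  | refl => exact RIn.refl
  | @tail b c hr h ih =>
    have hb : b ∈ C := (mem_comp_iff hC hu h.2.1).mpr hr
    have hc : c ∈ C := adj_same_comp hC hb h.1 h.2.2
    exact ih.tail ⟨h.1, hb, hc⟩

lemma hyperComps_of_conn (hne : F.Nonempty)
    (hconn : ∀ u ∈ F, ∀ v ∈ F, RIn G F u v) : hyperComps G F = {F} := by
  obtain ⟨v₀, hv₀⟩ := hne
  have key : ∀ C ∈ hyperComps G F, C = F := by
    intro C hC
    obtain ⟨u, hu⟩ := hyperComps_nonempty hC
    refine Set.Subset.antisymm (hyperComps_subset hC) (fun z hz => ?_)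
    exact (mem_comp_iff hC hu hz).mpr (hconn u (hyperComps_subset hC hu) z hz)
  ext D
  simp only [Set.mem_singleton_iff]
  constructor
  · exact key D
  · rintro rfl
    obtain ⟨E, hE, _⟩ := mem_hyperComps_self (G := G) hv₀
    have hed := key E hE; subst hed; exact hE

end Comps

section Counting
variable {V : Type*} [Fintype V] {G G' G'' : SimpleGraph V} {F : Set V} {u v x y : V}

/-- Total weight `∑ (|F| - 1)` of a hypergraph. -/
noncomputable def Wt (H : Set (Set V)) : ℕ :=
  ∑ F ∈ (Set.toFinite H).toFinset, (F.ncard - 1)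

/-- Number of connected components. -/
noncomputable def ncc (G : SimpleGraph V) : ℕ := Nat.card G.ConnectedComponent

lemma Wt_le_of_subset {A B : Set (Set V)} (h : A ⊆ B) : Wt A ≤ Wt B :=
  Finset.sum_le_sum_of_subset (Set.Finite.toFinset_subset_toFinset.mpr h)

lemma Wt_union_le (A B : Set (Set V)) : Wt (A ∪ B) ≤ Wt A + Wt B := by
  classical
  have h := Finset.sum_union_inter (s₁ := (Set.toFinite A).toFinset)
    (s₂ := (Set.toFinite B).toFinset) (f := fun F => F.ncard - 1)
  have he : (Set.toFinite (A ∪ B)).toFinset =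
      (Set.toFinite A).toFinset ∪ (Set.toFinite B).toFinset :=
    Set.Finite.toFinset_union _ _ _
  simp only [Wt]
  rw [he]
  omega

lemma Wt_singleton (C : Set V) : Wt ({C} : Set (Set V)) = C.ncard - 1 := by
  rw [Wt, Set.Finite.toFinset_singleton, Finset.sum_singleton]

lemma Wt_biUnion_le {ι : Type*} [DecidableEq ι] (S : Finset ι) (g : ι → Set (Set V)) :
    Wt (⋃ i ∈ (S : Set ι), g i) ≤ ∑ i ∈ S, Wt (g i) := by
  classical
  induction S using Finset.induction with
  | empty =>
    have h1 : (⋃ i ∈ ((∅ : Finset ι) : Set ι), g i) = (∅ : Set (Set V)) := by simp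
    rw [h1, Finset.sum_empty]
    refine le_of_eq ?_
    simp only [Wt]
    refine Finset.sum_eq_zero ?_
    intro x hx
    rw [Set.Finite.mem_toFinset] at hx
    exact hx.elim
  | insert _ _ hnotmem =>
    rename_i a s ih
    rw [Finset.coe_insert, Set.biUnion_insert, Finset.sum_insert hnotmem]
    exact (Wt_union_le _ _).trans (by omega)

lemma Wt_image_le {ι : Type*} [DecidableEq ι] (S : Finset ι) (g : ι → Set V) :
    Wt (g '' (S : Set ι)) ≤ ∑ i ∈ S, (Set.ncard (g i) - 1) := by
  have h : g '' (S : Set ι) = ⋃ i ∈ (S : Set ι), ({g i} : Set (Set V)) := by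
    ext C; simp [eq_comm]
  rw [h]
  exact (Wt_biUnion_le S _).trans (le_of_eq (by simp [Wt_singleton]))

lemma Wt_diff_singleton {A : Set (Set V)} {F₀ : Set V} (h : F₀ ∈ A) :
    Wt A = Wt (A \ {F₀}) + (F₀.ncard - 1) := by
  classical
  have he : (Set.toFinite (A \ {F₀})).toFinset =
      (Set.toFinite A).toFinset \ {F₀} := by
    rw [Set.Finite.toFinset_sdiff _ (Set.finite_singleton F₀) _, Set.Finite.toFinset_singleton]
  rw [Wt, Wt, he]
  exact Finset.sum_eq_sum_sdiff_singleton_add (by simpa using h) _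

lemma ncard_biUnion_eq (S : Finset (Set V))
    (hd : ∀ C ∈ S, ∀ D ∈ S, C ≠ D → Disjoint C D) :
    (⋃ C ∈ (S : Set (Set V)), C).ncard = ∑ C ∈ S, C.ncard := by
  classical
  induction S using Finset.induction with
  | empty => simp
  | insert _ _ hnotmem =>
    rename_i a s ih
    rw [Finset.coe_insert, Set.biUnion_insert, Finset.sum_insert hnotmem]
    have hdisj : Disjoint a (⋃ C ∈ (s : Set (Set V)), C) := by
      refine Set.disjoint_iff_forall_ne.mpr ?_
      rintro x hx y hy rfl
      simp only [Set.mem_iUnion] at hy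
      obtain ⟨C, hC, hyC⟩ := hy
      exact Set.disjoint_iff_forall_ne.mp
        (hd a (Finset.mem_insert_self _ _) C (Finset.mem_insert_of_mem hC)
          (by rintro rfl; exact hnotmem hC)) hx hyC rfl
    rw [Set.ncard_union_eq hdisj, ih (fun C hC D hD h =>
      hd C (Finset.mem_insert_of_mem hC) D (Finset.mem_insert_of_mem hD) h)]

end Counting

section NCC
variable {V : Type*} [Fintype V] {G G' G'' : SimpleGraph V} {F : Set V} {x y : V}

lemma ncc_congr (h : ∀ u v, G.Reachable u v ↔ G'.Reachable u v) : ncc G = ncc G' :=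
  Nat.card_congr (Quot.congrRight h)

lemma ncc_bot : ncc (⊥ : SimpleGraph V) = Fintype.card V := by
  rw [ncc, ← Nat.card_eq_fintype_card]
  refine Nat.card_congr (Equiv.symm (Equiv.ofBijective
    (fun v => (⊥ : SimpleGraph V).connectedComponentMk v) ⟨?_, ?_⟩))
  · intro a b hab
    exact SimpleGraph.reachable_bot.mp (SimpleGraph.ConnectedComponent.eq.mp hab)
  · intro C
    exact C.exists_rep

/-- Along any walk of the larger graph, either reach the target in `G`, or
enter `F` while staying in `G`. -/
lemma reach_or_enter (hadj : ∀ u v, G''.Adj u v → G.Adj u v ∨ (u ∈ F ∧ v ∈ F))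
    {x y : V} (h : G''.Reachable x y) :
    G.Reachable x y ∨ ∃ u ∈ F, G.Reachable x u := by
  obtain ⟨p⟩ := h
  induction p with
  | nil => exact Or.inl (SimpleGraph.Reachable.refl _)
  | @cons a b c h p ih =>
    rcases hadj _ _ h with h' | ⟨haF, hbF⟩
    · rcases ih with h'' | ⟨u, huF, hu⟩
      · exact Or.inl (h'.reachable.trans h'')
      · exact Or.inr ⟨u, huF, h'.reachable.trans hu⟩
    · exact Or.inr ⟨a, haF, SimpleGraph.Reachable.refl _⟩

/-- Key counting lemma: coarsening by edges inside a mutually-reachable set `F`. -/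
lemma ncc_key (hne : F.Nonempty) (hsub : G ≤ G'')
    (hadj : ∀ u v, G''.Adj u v → G.Adj u v ∨ (u ∈ F ∧ v ∈ F))
    (hreach : ∀ u ∈ F, ∀ v ∈ F, G''.Reachable u v) :
    ncc G + 1 ≤ ncc G'' + F.ncard := by
  classical
  set φ : G.ConnectedComponent → G''.ConnectedComponent :=
    SimpleGraph.ConnectedComponent.map (SimpleGraph.Hom.ofLE hsub) with hφ
  have hφmk : ∀ v : V, φ (G.connectedComponentMk v) = G''.connectedComponentMk v :=
    fun v => SimpleGraph.ConnectedComponent.map_mk _ v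
  set S : Set G.ConnectedComponent := {C | ∃ v ∈ F, G.connectedComponentMk v = C} with hS
  obtain ⟨v₀, hv₀⟩ := hne
  -- |S| ≤ |F|
  have hScard : S.ncard ≤ F.ncard := by
    have : S = G.connectedComponentMk '' F := by
      ext C; simp [hS, Set.mem_image]
    rw [this]
    exact Set.ncard_image_le
  -- φ is injective on Sᶜ
  have hinj : Set.InjOn φ Sᶜ := by
    have key : ∀ c d : V, G.connectedComponentMk c ∈ Sᶜ →
        φ (G.connectedComponentMk c) = φ (G.connectedComponentMk d) →
        G.connectedComponentMk c = G.connectedComponentMk d := by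
      intro c d hC hCD
      rw [hφmk, hφmk, SimpleGraph.ConnectedComponent.eq] at hCD
      rcases reach_or_enter hadj hCD with h | ⟨u, huF, hu⟩
      · exact SimpleGraph.ConnectedComponent.eq.mpr h
      · exact absurd ⟨u, huF, (SimpleGraph.ConnectedComponent.eq.mpr hu).symm⟩ hC
    intro C hC D hD hCD
    obtain ⟨c, hc⟩ := C.exists_rep
    obtain ⟨d, hd⟩ := D.exists_rep
    subst hc; subst hd
    exact key c d hC hCD
  -- φ '' S is the single component of v₀ in G''
  have hSimg : φ '' S = {G''.connectedComponentMk v₀} := by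
    ext z
    constructor
    · rintro ⟨C, ⟨v, hvF, rfl⟩, rfl⟩
      rw [hφmk]
      exact SimpleGraph.ConnectedComponent.eq.mpr (hreach v hvF v₀ hv₀)
    · rintro rfl
      exact ⟨G.connectedComponentMk v₀, ⟨v₀, hv₀, rfl⟩, hφmk v₀⟩
  -- φ '' Sᶜ avoids that component
  have hdisj : Disjoint (φ '' Sᶜ) (φ '' S) := by
    rw [hSimg, Set.disjoint_singleton_right]
    rintro ⟨C, hC, hCe⟩
    obtain ⟨c, hc⟩ := C.exists_rep
    subst hc
    have hCe' : φ (G.connectedComponentMk c) = G''.connectedComponentMk v₀ := hCe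
    rw [hφmk] at hCe'
    have : G''.Reachable c v₀ := SimpleGraph.ConnectedComponent.eq.mp hCe'
    rcases reach_or_enter hadj this with h | ⟨u, huF, hu⟩
    · exact hC ⟨v₀, hv₀, (SimpleGraph.ConnectedComponent.eq.mpr h).symm⟩
    · exact hC ⟨u, huF, (SimpleGraph.ConnectedComponent.eq.mpr hu).symm⟩
  have hcount : (φ '' Sᶜ ∪ φ '' S).ncard ≤ ncc G'' := by
    rw [ncc]
    have := Set.ncard_le_ncard (Set.subset_univ (φ '' Sᶜ ∪ φ '' S))
      (Set.finite_univ)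
    simpa [Set.ncard_univ] using this
  rw [Set.ncard_union_eq hdisj, Set.ncard_image_of_injOn hinj, hSimg,
    Set.ncard_singleton] at hcount
  have htot : S.ncard + Sᶜ.ncard = ncc G := Set.ncard_add_ncard_compl S
  omega

lemma card_add_one_le_of_surj {α β : Type*} [Finite α] (f : α → β)
    (hsurj : Function.Surjective f) {a b : α} (hne : a ≠ b) (heq : f a = f b) :
    Nat.card β + 1 ≤ Nat.card α := by
  have h1 : Set.range f = f '' (Set.univ \ {a}) := by
    ext z
    constructor
    · rintro ⟨x, rfl⟩
      by_cases hxa : x = a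
      · exact ⟨b, ⟨trivial, by simp [Ne.symm hne]⟩, by rw [← heq, hxa]⟩
      · exact ⟨x, ⟨trivial, by simp [hxa]⟩, rfl⟩
    · rintro ⟨x, _, rfl⟩
      exact ⟨x, rfl⟩
  have h2 : Nat.card β = (f '' (Set.univ \ {a})).ncard := by
    rw [← h1, Set.range_eq_univ.mpr hsurj, Set.ncard_univ]
  have h3 : (f '' (Set.univ \ {a})).ncard ≤ (Set.univ \ {a} : Set α).ncard :=
    Set.ncard_image_le
  have h4 : (Set.univ \ {a} : Set α).ncard = Nat.card α - 1 := by
    rw [Set.ncard_diff (by simp), Set.ncard_univ, Set.ncard_singleton]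
  have h5 : 1 ≤ Nat.card α := Nat.one_le_iff_ne_zero.mpr (by
    simp [Nat.card_ne_zero]
    exact ⟨⟨a⟩, inferInstance⟩)
  omega

/-- Removing things cannot merge components; here: if `x,y` are adjacent in `G`
but not reachable in `G' ≤ G`, the component count strictly drops from `G'` to `G`. -/
lemma ncc_add_one_le_of (hsub : G' ≤ G) (hadjxy : G.Adj x y)
    (hnr : ¬ G'.Reachable x y) : ncc G + 1 ≤ ncc G' := by
  classical
  set φ : G'.ConnectedComponent → G.ConnectedComponent :=
    SimpleGraph.ConnectedComponent.map (SimpleGraph.Hom.ofLE hsub) with hφ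
  have hφmk : ∀ v : V, φ (G'.connectedComponentMk v) = G.connectedComponentMk v :=
    fun v => SimpleGraph.ConnectedComponent.map_mk _ v
  refine card_add_one_le_of_surj φ ?_ (a := G'.connectedComponentMk x)
    (b := G'.connectedComponentMk y) ?_ ?_
  · intro C
    obtain ⟨c, hc⟩ := C.exists_rep
    exact ⟨G'.connectedComponentMk c, by rw [hφmk]; exact hc⟩
  · intro h
    exact hnr (SimpleGraph.ConnectedComponent.eq.mp h)
  · rw [hφmk, hφmk]
    exact SimpleGraph.ConnectedComponent.eq.mpr hadjxy.reachable

end NCC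

section Transfer
variable {V : Type*} [Fintype V] {G G' : SimpleGraph V} {x y u v : V}

lemma hyperGraphOf_adj {H : Set (Set V)} {u v : V} :
    (hyperGraphOf H).Adj u v ↔ u ≠ v ∧ ∃ F ∈ H, u ∈ F ∧ v ∈ F := by
  rw [hyperGraphOf, SimpleGraph.fromRel_adj]
  constructor
  · rintro ⟨hne, ⟨F, hF, h1, h2⟩ | ⟨F, hF, h1, h2⟩⟩
    exacts [⟨hne, F, hF, h1, h2⟩, ⟨hne, F, hF, h2, h1⟩]
  · rintro ⟨hne, F, hF, h1, h2⟩
    exact ⟨hne, Or.inl ⟨F, hF, h1, h2⟩⟩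

lemma hyper_reach_iff {H : Set (Set V)}
    (hP1 : ∀ F ∈ H, ∀ u ∈ F, ∀ v ∈ F, G.Reachable u v)
    (hP2 : ∀ u v, G.Adj u v → ∃ F ∈ H, u ∈ F ∧ v ∈ F) (u v : V) :
    (hyperGraphOf H).Reachable u v ↔ G.Reachable u v := by
  constructor
  · intro h
    obtain ⟨p⟩ := h
    induction p with
    | nil => exact SimpleGraph.Reachable.refl _
    | @cons a b c h p ih =>
      obtain ⟨hne, F, hF, h1, h2⟩ := hyperGraphOf_adj.mp h
      exact (hP1 F hF a h1 b h2).trans ih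
  · intro h
    obtain ⟨p⟩ := h
    induction p with
    | nil => exact SimpleGraph.Reachable.refl _
    | @cons a b c h p ih =>
      obtain ⟨F, hF, h1, h2⟩ := hP2 a b h
      exact (SimpleGraph.Adj.reachable
        (hyperGraphOf_adj.mpr ⟨h.ne, F, hF, h1, h2⟩)).trans ih

lemma ncc_hyper_eq {H : Set (Set V)}
    (hP1 : ∀ F ∈ H, ∀ u ∈ F, ∀ v ∈ F, G.Reachable u v)
    (hP2 : ∀ u v, G.Adj u v → ∃ F ∈ H, u ∈ F ∧ v ∈ F) :
    ncc (hyperGraphOf H) = ncc G :=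
  ncc_congr (hyper_reach_iff hP1 hP2)

/-- Deleting an edge whose endpoints remain reachable preserves reachability. -/
lemma reach_iff_of_del (hsub : G' ≤ G)
    (hadj : ∀ u v, G.Adj u v → G'.Adj u v ∨ ((u = x ∧ v = y) ∨ (u = y ∧ v = x)))
    (hr : G'.Reachable x y) (u v : V) : G.Reachable u v ↔ G'.Reachable u v := by
  constructor
  · intro h
    obtain ⟨p⟩ := h
    induction p with
    | nil => exact SimpleGraph.Reachable.refl _
    | @cons a b c h p ih =>
      rcases hadj a b h with h' | ⟨rfl, rfl⟩ | ⟨rfl, rfl⟩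
      · exact h'.reachable.trans ih
      · exact hr.trans ih
      · exact hr.symm.trans ih
  · exact fun h => h.mono hsub

lemma reachable_rin_supp (h : G.Reachable u v) :
    RIn G ((G.connectedComponentMk u).supp) u v := by
  obtain ⟨p⟩ := h
  induction p with
  | nil => exact RIn.refl
  | @cons a b c h p ih =>
    have hab : G.connectedComponentMk a = G.connectedComponentMk b :=
      SimpleGraph.ConnectedComponent.eq.mpr h.reachable
    refine Relation.ReflTransGen.head ⟨h, ?_, ?_⟩ ?_
    · rw [SimpleGraph.ConnectedComponent.mem_supp_iff]
    · rw [SimpleGraph.ConnectedComponent.mem_supp_iff, ← hab]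
    · rw [hab]; exact ih

lemma initial_P1 (G : SimpleGraph V) :
    ∀ F ∈ initialHyper G, ∀ u ∈ F, ∀ v ∈ F, RIn G F u v := by
  rintro F ⟨⟨cc, rfl⟩, -⟩ u hu v hv
  rw [SimpleGraph.ConnectedComponent.mem_supp_iff] at hu hv
  have hr : G.Reachable u v := by
    rw [← SimpleGraph.ConnectedComponent.eq, hu, hv]
  have := reachable_rin_supp hr
  rwa [hu] at this

lemma initial_P2 (G : SimpleGraph V) :
    ∀ u v, G.Adj u v → ∃ F ∈ initialHyper G, u ∈ F ∧ v ∈ F := by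
  intro u v h
  refine ⟨(G.connectedComponentMk u).supp, ⟨⟨_, rfl⟩, ?_⟩, ?_, ?_⟩
  · refine (Set.one_lt_ncard_iff (Set.toFinite _)).mpr ⟨u, v, ?_, ?_, h.ne⟩
    · rw [SimpleGraph.ConnectedComponent.mem_supp_iff]
    · rw [SimpleGraph.ConnectedComponent.mem_supp_iff]
      exact SimpleGraph.ConnectedComponent.eq.mpr h.reachable.symm
  · rw [SimpleGraph.ConnectedComponent.mem_supp_iff]
  · rw [SimpleGraph.ConnectedComponent.mem_supp_iff]
    exact SimpleGraph.ConnectedComponent.eq.mpr h.reachable.symm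

lemma initial_P4 (G : SimpleGraph V) :
    ∀ F ∈ initialHyper G, ∀ F' ∈ initialHyper G, F ≠ F' →
      ∀ a b, a ∈ F → a ∈ F' → b ∈ F → b ∈ F' → a = b := by
  rintro F ⟨⟨cc, rfl⟩, -⟩ F' ⟨⟨cc', rfl⟩, -⟩ hne a b ha ha' _ _
  rw [SimpleGraph.ConnectedComponent.mem_supp_iff] at ha ha'
  exact absurd (by rw [← ha, ha'] : cc = cc') (fun h => hne (by rw [h]))

lemma Wt_initial_le (G : SimpleGraph V) :
    Wt (initialHyper G) + ncc G ≤ Fintype.card V := by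
  classical
  letI : Fintype G.ConnectedComponent := Fintype.ofFinite _
  have hcard : Fintype.card V = ∑ c : G.ConnectedComponent, c.supp.ncard := by
    rw [← Finset.card_univ,
      Finset.card_eq_sum_card_fiberwise (f := G.connectedComponentMk)
        (t := Finset.univ) (fun x _ => Finset.mem_univ _)]
    refine Finset.sum_congr rfl fun c _ => ?_
    rw [Set.ncard_eq_toFinset_card']
    congr 1
    ext v
    simp [SimpleGraph.ConnectedComponent.mem_supp_iff]
  have hsupp_ne : ∀ c : G.ConnectedComponent, 1 ≤ c.supp.ncard := by
    intro c
    obtain ⟨v, hv⟩ := c.exists_rep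
    exact (Set.ncard_pos (Set.toFinite _)).mpr
      ⟨v, by rw [SimpleGraph.ConnectedComponent.mem_supp_iff]; exact hv⟩
  have hW : Wt (initialHyper G) ≤
      ∑ c : G.ConnectedComponent, (c.supp.ncard - 1) := by
    refine le_trans (Wt_le_of_subset (B := SimpleGraph.ConnectedComponent.supp ''
      ((Finset.univ : Finset G.ConnectedComponent) : Set G.ConnectedComponent)) ?_)
      (Wt_image_le _ _)
    rintro C ⟨⟨cc, rfl⟩, -⟩
    exact ⟨cc, by simp, rfl⟩
  have hncc : ncc G = ∑ _c : G.ConnectedComponent, 1 := by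
    simp [ncc, Nat.card_eq_fintype_card]
  have hsum : ∑ c : G.ConnectedComponent, (c.supp.ncard - 1) +
      ∑ _c : G.ConnectedComponent, 1 = ∑ c : G.ConnectedComponent, c.supp.ncard := by
    rw [← Finset.sum_add_distrib]
    refine Finset.sum_congr rfl fun c _ => ?_
    have := hsupp_ne c
    omega
  omega

end Transfer

section LemmaA
variable {V : Type*} [Fintype V] {G' : SimpleGraph V} {wv : V}

lemma Wt_union_eq {A B : Set (Set V)} (hd : Disjoint A B) :
    Wt (A ∪ B) = Wt A + Wt B := by
  classical
  have he : (Set.toFinite (A ∪ B)).toFinset =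
      (Set.toFinite A).toFinset ∪ (Set.toFinite B).toFinset :=
    Set.Finite.toFinset_union _ _ _
  simp only [Wt]
  rw [he, Finset.sum_union]
  rw [Finset.disjoint_left]
  intro a ha hb
  rw [Set.Finite.mem_toFinset] at ha hb
  exact Set.disjoint_left.mp hd ha hb

lemma Wt_insert {A : Set (Set V)} {F : Set V} (h : F ∉ A) :
    Wt (insert F A) = (F.ncard - 1) + Wt A := by
  classical
  have he : (Set.toFinite (insert F A)).toFinset =
      insert F (Set.toFinite A).toFinset := by
    ext D
    simp only [Set.Finite.mem_toFinset, Finset.mem_insert, Set.mem_insert_iff]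
  simp only [Wt]
  rw [he, Finset.sum_insert (by simpa using h)]

lemma hyperGraphOf_empty : hyperGraphOf (∅ : Set (Set V)) = ⊥ := by
  ext u v
  simp [hyperGraphOf_adj]

lemma Wt_empty : Wt (∅ : Set (Set V)) = 0 := by
  simp only [Wt]
  refine Finset.sum_eq_zero fun x hx => ?_
  rw [Set.Finite.mem_toFinset] at hx
  exact hx.elim

/-- The hyperforest inequality: `|V| ≤ W(H) + c(H)`. -/
lemma card_le_Wt_add_ncc (H : Set (Set V)) :
    Fintype.card V ≤ Wt H + ncc (hyperGraphOf H) := by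
  classical
  refine Set.Finite.induction_on H (Set.toFinite H) ?_ ?_
  case _ =>
    rw [Wt_empty, hyperGraphOf_empty, ncc_bot]
    omega
  case _ =>
    intro F H hFH hfin ih
    by_cases hne : F.Nonempty
    · have hsub : hyperGraphOf H ≤ hyperGraphOf (insert F H) := by
        intro u v h
        obtain ⟨h1, F', h2, h3, h4⟩ := hyperGraphOf_adj.mp h
        exact hyperGraphOf_adj.mpr ⟨h1, F', Set.mem_insert_of_mem _ h2, h3, h4⟩
      have hkey := ncc_key (F := F) hne hsub ?_ ?_
      · have hw : Wt (insert F H) = (F.ncard - 1) + Wt H := Wt_insert hFH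
        have hF1 : 1 ≤ F.ncard := (Set.ncard_pos (Set.toFinite F)).mpr hne
        omega
      · intro u v h
        obtain ⟨h1, F', h2, h3, h4⟩ := hyperGraphOf_adj.mp h
        rcases Set.mem_insert_iff.mp h2 with rfl | h2'
        · exact Or.inr ⟨h3, h4⟩
        · exact Or.inl (hyperGraphOf_adj.mpr ⟨h1, F', h2', h3, h4⟩)
      · intro u hu v hv
        by_cases huv : u = v
        · exact huv ▸ SimpleGraph.Reachable.refl u
        · exact (SimpleGraph.Adj.reachable
            (hyperGraphOf_adj.mpr ⟨huv, F, Set.mem_insert _ _, hu, hv⟩))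
    · rw [Set.not_nonempty_iff_eq_empty] at hne
      subst hne
      have hgeq : hyperGraphOf (insert (∅ : Set V) H) = hyperGraphOf H := by
        ext u v
        simp only [hyperGraphOf_adj]
        constructor
        · rintro ⟨h1, F', h2, h3, h4⟩
          rcases Set.mem_insert_iff.mp h2 with rfl | h2'
          · exact h3.elim
          · exact ⟨h1, F', h2', h3, h4⟩
        · rintro ⟨h1, F', h2, h3, h4⟩
          exact ⟨h1, F', Set.mem_insert_of_mem _ h2, h3, h4⟩
      rw [hgeq, Wt_insert hFH]
      simpa using ih

/-- The vertex operation does not increase the total weight. -/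
lemma Wt_vertexOp_le (G' : SimpleGraph V) (wv : V) (H : Set (Set V)) :
    Wt (vertexOp G' wv H) ≤ Wt H := by
  classical
  set A : Set (Set V) := {F ∈ H | wv ∉ F} with hA
  set T : Set (Set V) := {F ∈ H | wv ∈ F} with hT
  have hAT : Disjoint A T := by
    rw [Set.disjoint_left]; rintro F ⟨_, h1⟩ ⟨_, h2⟩; exact h1 h2
  have hATH : A ∪ T = H := by
    ext F; constructor
    · rintro (⟨h, _⟩ | ⟨h, _⟩) <;> exact h
    · intro h; by_cases hw : wv ∈ F
      · exact Or.inr ⟨h, hw⟩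
      · exact Or.inl ⟨h, hw⟩
  have himg : ∀ F ∈ T, Wt ((fun C => C ∪ {wv}) '' hyperComps G' (F \ {wv}))
      ≤ F.ncard - 1 := by
    intro F hF
    set S' := (Set.toFinite (hyperComps G' (F \ {wv}))).toFinset with hS'
    have hcoe : hyperComps G' (F \ {wv}) = (S' : Set (Set V)) :=
      (Set.Finite.coe_toFinset _).symm
    rw [hcoe]
    refine (Wt_image_le S' _).trans ?_
    have hstep : ∀ C ∈ S', ((C ∪ {wv}).ncard - 1) = C.ncard := by
      intro C hC
      rw [Set.Finite.mem_toFinset] at hC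
      have hwC : wv ∉ C := fun h => (hyperComps_subset hC h).2 rfl
      rw [Set.union_singleton, Set.ncard_insert_of_notMem hwC]
      omega
    rw [Finset.sum_congr rfl hstep]
    have hdisj : ∀ C ∈ S', ∀ D ∈ S', C ≠ D → Disjoint C D := by
      intro C hC D hD hne
      rw [Set.Finite.mem_toFinset] at hC hD
      rw [Set.disjoint_left]
      intro a haC haD
      exact hne (hyperComps_eq_of_mem hC hD haC haD)
    rw [← ncard_biUnion_eq S' hdisj]
    have hsub2 : (⋃ C ∈ (S' : Set (Set V)), C) ⊆ F \ {wv} := by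
      intro z hz
      simp only [Set.mem_iUnion] at hz
      obtain ⟨C, hC, hzC⟩ := hz
      rw [← hcoe] at hC
      exact hyperComps_subset hC hzC
    refine (Set.ncard_le_ncard hsub2 (Set.toFinite _)).trans ?_
    rw [Set.ncard_diff_singleton_of_mem hF.2]
  -- assemble
  have h1 : Wt (vertexOp G' wv H) ≤ Wt A + Wt (⋃ F ∈ T, (fun C => C ∪ {wv}) ''
      hyperComps G' (F \ {wv})) := Wt_union_le _ _
  set T' := (Set.toFinite T).toFinset with hT'
  have hcoeT : T = (T' : Set (Set V)) := (Set.Finite.coe_toFinset _).symm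
  have h2 : Wt (⋃ F ∈ T, (fun C => C ∪ {wv}) '' hyperComps G' (F \ {wv})) ≤
      ∑ F ∈ T', Wt ((fun C => C ∪ {wv}) '' hyperComps G' (F \ {wv})) := by
    rw [hcoeT]
    exact Wt_biUnion_le T' _
  have h3 : ∑ F ∈ T', Wt ((fun C => C ∪ {wv}) '' hyperComps G' (F \ {wv})) ≤
      ∑ F ∈ T', (F.ncard - 1) := by
    refine Finset.sum_le_sum fun F hF => himg F ?_
    rw [hT', Set.Finite.mem_toFinset] at hF
    exact hF
  have h4 : ∑ F ∈ T', (F.ncard - 1) = Wt T := rfl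
  have h5 : Wt A + Wt T = Wt H := by rw [← Wt_union_eq hAT, hATH]
  omega

end LemmaA

section VOp
variable {V : Type*} [Fintype V] {G' : SimpleGraph V} {H : Set (Set V)} {wv : V} {F C C' D : Set V}

/-- The invariant maintained along the process. -/
def HInv (G : SimpleGraph V) (H : Set (Set V)) : Prop :=
  (∀ F ∈ H, ∀ u ∈ F, ∀ v ∈ F, RIn G F u v) ∧
  (∀ u v, G.Adj u v → ∃ F ∈ H, u ∈ F ∧ v ∈ F) ∧
  (∀ F ∈ H, 2 ≤ F.ncard) ∧
  (∀ F ∈ H, ∀ F' ∈ H, F ≠ F' → ∀ a b, a ∈ F → a ∈ F' → b ∈ F → b ∈ F' → a = b)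

lemma mem_vertexOp_iff :
    D ∈ vertexOp G' wv H ↔ (D ∈ H ∧ wv ∉ D) ∨
      ∃ F, (F ∈ H ∧ wv ∈ F) ∧ ∃ C ∈ hyperComps G' (F \ {wv}), D = C ∪ {wv} := by
  simp only [vertexOp, Set.mem_union, Set.mem_setOf_eq, Set.mem_iUnion, Set.mem_image]
  constructor
  · rintro (h | ⟨F, hF, C, hC, rfl⟩)
    · exact Or.inl h
    · exact Or.inr ⟨F, hF, C, hC, rfl⟩
  · rintro (h | ⟨F, hF, C, hC, rfl⟩)
    · exact Or.inl h
    · exact Or.inr ⟨F, hF, C, hC, rfl⟩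

lemma exists_adj_to_w (hP1F : ∀ u ∈ F, ∀ v ∈ F, RIn G' F u v) (hw : wv ∈ F)
    (hC : C ∈ hyperComps G' (F \ {wv})) : ∃ z ∈ C, G'.Adj z wv := by
  obtain ⟨u₀, hu₀⟩ := hyperComps_nonempty hC
  have hu₀F : u₀ ∈ F \ {wv} := hyperComps_subset hC hu₀
  have hr : RIn G' F u₀ wv := hP1F u₀ hu₀F.1 wv hw
  have claim : ∀ a, RIn G' F a wv → a ∈ C → ∃ z ∈ C, G'.Adj z wv := by
    intro a ha
    induction ha using Relation.ReflTransGen.head_induction_on with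
    | refl =>
      intro haC
      exact absurd ((hyperComps_subset hC) haC).2 (by simp)
    | @head a b h hr ih =>
      intro haC
      by_cases hbw : b = wv
      · exact ⟨a, haC, hbw ▸ h.1⟩
      · exact ih (adj_same_comp hC haC h.1 ⟨h.2.2, hbw⟩)
  exact claim u₀ hr hu₀

lemma new_set_conn (hP1F : ∀ u ∈ F, ∀ v ∈ F, RIn G' F u v) (hw : wv ∈ F)
    (hC : C ∈ hyperComps G' (F \ {wv})) :
    ∀ u ∈ C ∪ {wv}, ∀ v ∈ C ∪ {wv}, RIn G' (C ∪ {wv}) u v := by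
  obtain ⟨z, hzC, hzadj⟩ := exists_adj_to_w hP1F hw hC
  have hCC : ∀ u ∈ C, ∀ v ∈ C, RIn G' (C ∪ {wv}) u v := fun u hu v hv =>
    (rin_within hC hu hv).mono_set Set.subset_union_left
  have hCw : ∀ u ∈ C, RIn G' (C ∪ {wv}) u wv := fun u hu =>
    (hCC u hu z hzC).tail ⟨hzadj, Or.inl hzC, Or.inr rfl⟩
  rintro u (hu | hu) v (hv | hv)
  · exact hCC u hu v hv
  · rw [Set.mem_singleton_iff] at hv; subst hv; exact hCw u hu
  · rw [Set.mem_singleton_iff] at hu; subst hu; exact (hCw v hv).symm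
  · rw [Set.mem_singleton_iff] at hu hv; subst hu; subst hv; exact RIn.refl

lemma vertexOp_inv (hinv : HInv G' H) : HInv G' (vertexOp G' wv H) := by
  obtain ⟨P1, P2, P3, P4⟩ := hinv
  have hkey : ∀ F ∈ H, ∀ F' ∈ H, F ≠ F' →
      ∀ C ∈ hyperComps G' (F \ {wv}), ∀ C' ∈ hyperComps G' (F' \ {wv}),
      wv ∈ F → wv ∈ F' → C ∪ {wv} ≠ C' ∪ {wv} := by
    intro F hF F' hF' hne C hC C' hC' hwF hwF' heq
    obtain ⟨z, hzC⟩ := hyperComps_nonempty hC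
    have hz : z ∈ F \ {wv} := hyperComps_subset hC hzC
    have hzC' : z ∈ C' := by
      have : z ∈ C' ∪ {wv} := heq ▸ (Or.inl hzC : z ∈ C ∪ {wv})
      rcases this with h | h
      · exact h
      · exact absurd (Set.mem_singleton_iff.mp h) hz.2
    have hz' : z ∈ F' \ {wv} := hyperComps_subset hC' hzC'
    exact hz.2 (P4 F hF F' hF' hne z wv hz.1 hz'.1 hwF hwF')
  refine ⟨?_, ?_, ?_, ?_⟩
  · -- P1
    intro D hD
    rcases mem_vertexOp_iff.mp hD with ⟨hDH, _⟩ | ⟨F, ⟨hF, hwF⟩, C, hC, rfl⟩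
    · exact P1 D hDH
    · exact new_set_conn (P1 F hF) hwF hC
  · -- P2
    intro u v hadj
    obtain ⟨F, hF, huF, hvF⟩ := P2 u v hadj
    by_cases hwF : wv ∈ F
    · by_cases hvw : v = wv
      · have hu : u ∈ F \ {wv} :=
          ⟨huF, fun h => hadj.ne ((Set.mem_singleton_iff.mp h).trans hvw.symm)⟩
        obtain ⟨C, hC, huC⟩ := mem_hyperComps_self (G := G') hu
        exact ⟨C ∪ {wv}, mem_vertexOp_iff.mpr (Or.inr ⟨F, ⟨hF, hwF⟩, C, hC, rfl⟩),
          Or.inl huC, Or.inr (Set.mem_singleton_iff.mpr hvw)⟩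
      · by_cases huw : u = wv
        · have hv : v ∈ F \ {wv} :=
            ⟨hvF, fun h => hadj.ne (huw.trans (Set.mem_singleton_iff.mp h).symm)⟩
          obtain ⟨C, hC, hvC⟩ := mem_hyperComps_self (G := G') hv
          exact ⟨C ∪ {wv}, mem_vertexOp_iff.mpr (Or.inr ⟨F, ⟨hF, hwF⟩, C, hC, rfl⟩),
            Or.inr (Set.mem_singleton_iff.mpr huw), Or.inl hvC⟩
        · have hu : u ∈ F \ {wv} := ⟨huF, huw⟩
          have hv : v ∈ F \ {wv} := ⟨hvF, hvw⟩
          obtain ⟨C, hC, huC⟩ := mem_hyperComps_self (G := G') hu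
          have hvC : v ∈ C := adj_same_comp hC huC hadj hv
          exact ⟨C ∪ {wv}, mem_vertexOp_iff.mpr (Or.inr ⟨F, ⟨hF, hwF⟩, C, hC, rfl⟩),
            Or.inl huC, Or.inl hvC⟩
    · exact ⟨F, mem_vertexOp_iff.mpr (Or.inl ⟨hF, hwF⟩), huF, hvF⟩
  · -- P3
    intro D hD
    rcases mem_vertexOp_iff.mp hD with ⟨hDH, _⟩ | ⟨F, ⟨hF, hwF⟩, C, hC, rfl⟩
    · exact P3 D hDH
    · obtain ⟨z, hz⟩ := hyperComps_nonempty hC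
      have hzw : z ≠ wv := (hyperComps_subset hC hz).2
      exact (Set.one_lt_ncard_iff (Set.toFinite _)).mpr
        ⟨z, wv, Or.inl hz, Or.inr rfl, hzw⟩
  · -- P4
    intro D hD D' hD' hne a b haD haD' hbD hbD'
    rcases mem_vertexOp_iff.mp hD with ⟨hDH, hwD⟩ | ⟨F, ⟨hF, hwF⟩, C, hC, rfl⟩
    · rcases mem_vertexOp_iff.mp hD' with ⟨hDH', hwD'⟩ | ⟨F', ⟨hF', hwF'⟩, C', hC', rfl⟩
      · exact P4 D hDH D' hDH' hne a b haD haD' hbD hbD'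
      · -- D old, D' = C' ∪ {wv}
        have haw : a ≠ wv := fun h => hwD (h ▸ haD)
        have hbw : b ≠ wv := fun h => hwD (h ▸ hbD)
        have haC' : a ∈ C' := by
          rcases haD' with h | h
          · exact h
          · exact absurd (Set.mem_singleton_iff.mp h) haw
        have hbC' : b ∈ C' := by
          rcases hbD' with h | h
          · exact h
          · exact absurd (Set.mem_singleton_iff.mp h) hbw
        have hDF' : D ≠ F' := fun h => hwD (h ▸ hwF')
        exact P4 D hDH F' hF' hDF' a b haD (hyperComps_subset hC' haC').1
          hbD (hyperComps_subset hC' hbC').1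
    · rcases mem_vertexOp_iff.mp hD' with ⟨hDH', hwD'⟩ | ⟨F', ⟨hF', hwF'⟩, C', hC', rfl⟩
      · -- D = C ∪ {wv}, D' old
        have haw : a ≠ wv := fun h => hwD' (h ▸ haD')
        have hbw : b ≠ wv := fun h => hwD' (h ▸ hbD')
        have haC : a ∈ C := by
          rcases haD with h | h
          · exact h
          · exact absurd (Set.mem_singleton_iff.mp h) haw
        have hbC : b ∈ C := by
          rcases hbD with h | h
          · exact h
          · exact absurd (Set.mem_singleton_iff.mp h) hbw
        have hDF : D' ≠ F := fun h => hwD' (h ▸ hwF)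
        exact P4 D' hDH' F hF hDF a b haD' (hyperComps_subset hC haC).1
          hbD' (hyperComps_subset hC hbC).1
      · -- both new
        by_cases hab : a = b
        · exact hab
        · exfalso
          have hcommon : ∀ z, z ∈ C ∪ {wv} → z ∈ C' ∪ {wv} → z ≠ wv → False := by
            intro z hz hz' hzw
            have hzC : z ∈ C := by
              rcases hz with h | h
              · exact h
              · exact absurd (Set.mem_singleton_iff.mp h) hzw
            have hzC' : z ∈ C' := by
              rcases hz' with h | h
              · exact h
              · exact absurd (Set.mem_singleton_iff.mp h) hzw
            by_cases hFF : F = F'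
            · subst hFF
              exact hne (by rw [hyperComps_eq_of_mem hC hC' hzC hzC'])
            · exact hzw (P4 F hF F' hF' hFF z wv (hyperComps_subset hC hzC).1
                (hyperComps_subset hC' hzC').1 hwF hwF')
          by_cases haw : a = wv
          · exact hcommon b hbD hbD' (fun h => hab (haw.trans h.symm) )
          · exact hcommon a haD haD' haw

end VOp

section Step
variable {V : Type*} [Fintype V]

lemma step_main {G G' : SimpleGraph V} {H : Set (Set V)}
    {e : Sym2 V} {x y wv : V} {V1 V2 : Set V}
    (hInv : HInv G H) (hWb : Wt H + ncc (hyperGraphOf H) ≤ Fintype.card V)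
    (hxy : G.Adj x y) (he : e = s(x, y))
    (hsub : G' ≤ G)
    (hadj : ∀ u v, G.Adj u v → G'.Adj u v ∨ ((u = x ∧ v = y) ∨ (u = y ∧ v = x)))
    (hdisj : Disjoint V1 V2) (hw1 : wv ∉ V1) (hw2 : wv ∉ V2)
    (hcover : ∀ z : V, z ∈ V1 ∨ z ∈ V2 ∨ z = wv)
    (hx1 : x ∈ V1) (hy2 : y ∈ V2)
    (hcross : ∀ a ∈ V1, ∀ b ∈ V2, ¬ G'.Adj a b) :
    HInv G' (hstep G' e wv H) ∧
    Wt (hstep G' e wv H) + ncc (hyperGraphOf (hstep G' e wv H)) ≤ Fintype.card V ∧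
    (((hstep G' e wv H).ncard ≥ H.ncard + 1 ∧
        ncc (hyperGraphOf (hstep G' e wv H)) = ncc (hyperGraphOf H)) ∨
      (H.ncard ≤ (hstep G' e wv H).ncard + 1 ∧
        ncc (hyperGraphOf (hstep G' e wv H)) = ncc (hyperGraphOf H) + 1)) := by
  classical
  obtain ⟨P1, P2, P3, P4⟩ := hInv
  have hxyne : x ≠ y := hxy.ne
  obtain ⟨F₀, hF₀, hxF₀, hyF₀⟩ := P2 x y hxy
  have huniq : ∀ F ∈ H, x ∈ F → y ∈ F → F = F₀ := by
    intro F hF hx hy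
    by_contra hne
    exact hxyne (P4 F hF F₀ hF₀ hne x y hx hxF₀ hy hyF₀)
  have hcond : ∀ D : Set V, (∀ z ∈ e, z ∈ D) ↔ (x ∈ D ∧ y ∈ D) := by
    intro D
    subst he
    constructor
    · intro h
      exact ⟨h x (by simp), h y (by simp)⟩
    · rintro ⟨h1, h2⟩ z hz
      rcases Sym2.mem_iff.mp hz with rfl | rfl
      exacts [h1, h2]
  set K : Set (Set V) := {C | C ∈ hyperComps G' F₀ ∧ 1 < C.ncard} with hKdef
  have hedge : edgeOp G' e H = (H \ {F₀}) ∪ K := by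
    ext D
    simp only [edgeOp, Set.mem_union, Set.mem_setOf_eq, Set.mem_iUnion,
      Set.mem_diff, Set.mem_singleton_iff, hKdef]
    constructor
    · rintro (⟨hD, hno⟩ | ⟨F, ⟨hF, hcondF⟩, hDc⟩)
      · refine Or.inl ⟨hD, ?_⟩
        rintro rfl
        exact hno ((hcond D).mpr ⟨hxF₀, hyF₀⟩)
      · have hFF : F = F₀ := huniq F hF ((hcond F).mp hcondF).1 ((hcond F).mp hcondF).2
        exact Or.inr (hFF ▸ hDc)
    · rintro (⟨hD, hne⟩ | hDK)
      · exact Or.inl ⟨hD, fun hall =>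
          hne (huniq D hD ((hcond D).mp hall).1 ((hcond D).mp hall).2)⟩
      · exact Or.inr ⟨F₀, ⟨hF₀, (hcond F₀).mpr ⟨hxF₀, hyF₀⟩⟩, hDK⟩
  have hGF : ∀ F, F ∈ H → F ≠ F₀ → ∀ a b, G.Adj a b → a ∈ F → b ∈ F → G'.Adj a b := by
    intro F hF hne a b hab haF hbF
    rcases hadj a b hab with h | ⟨rfl, rfl⟩ | ⟨rfl, rfl⟩
    · exact h
    · exact absurd (huniq F hF haF hbF) hne
    · exact absurd (huniq F hF hbF haF) hne
  have hF₀ncard : 2 ≤ F₀.ncard := P3 F₀ hF₀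
  have hF₀ne : F₀.Nonempty := (Set.ncard_pos (Set.toFinite _)).mp (by omega)
  have hInv' : HInv G' ((H \ {F₀}) ∪ K) := by
    refine ⟨?_, ?_, ?_, ?_⟩
    · rintro F (⟨hF, hFne⟩ | ⟨hFc, -⟩)
      · intro u hu v hv
        exact (P1 F hF u hu v hv).mono_graph
          (fun a b hab ha hb => hGF F hF hFne a b hab ha hb)
      · intro u hu v hv
        exact rin_within hFc hu hv
    · intro u v huv
      have hGuv : G.Adj u v := hsub huv
      obtain ⟨F, hF, huF, hvF⟩ := P2 u v hGuv
      by_cases hFe : F = F₀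
      · obtain ⟨C, hC, huC⟩ := mem_hyperComps_self (G := G') (F := F₀) (hFe ▸ huF)
        have hvC : v ∈ C := adj_same_comp hC huC huv (hFe ▸ hvF)
        refine ⟨C, Or.inr ⟨hC, ?_⟩, huC, hvC⟩
        exact (Set.one_lt_ncard_iff (Set.toFinite _)).mpr ⟨u, v, huC, hvC, huv.ne⟩
      · exact ⟨F, Or.inl ⟨hF, hFe⟩, huF, hvF⟩
    · rintro F (⟨hF, -⟩ | ⟨-, h2⟩)
      · exact P3 F hF
      · exact h2
    · rintro F (⟨hF, hFne⟩ | ⟨hFc, -⟩) F' (⟨hF', hFne'⟩ | ⟨hFc', -⟩) hne a b ha ha' hb hb'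
      · exact P4 F hF F' hF' hne a b ha ha' hb hb'
      · exact P4 F hF F₀ hF₀ hFne a b ha (hyperComps_subset hFc' ha')
          hb (hyperComps_subset hFc' hb')
      · exact P4 F' hF' F₀ hF₀ hFne' a b ha' (hyperComps_subset hFc ha)
          hb' (hyperComps_subset hFc hb)
      · exact absurd (hyperComps_eq_of_mem hFc hFc' ha ha') hne
  have hcrossw : ∀ (F : Set V) (a b : V), a ∈ V1 → b ∈ V2 → RIn G' F a b → wv ∈ F := by
    intro F a b ha hb hr
    have claim : ∀ c, RIn G' F c b → c ∈ V1 → wv ∈ F := by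
      intro c hc
      induction hc using Relation.ReflTransGen.head_induction_on with
      | refl =>
        intro hbV1
        exact absurd hb (fun h => Set.disjoint_left.mp hdisj hbV1 h)
      | @head p q hpq hqb ih =>
        intro hpV1
        rcases hcover q with hq | hq | hq
        · exact ih hq
        · exact absurd hpq.1 (hcross p hpV1 q hq)
        · exact hq ▸ hpq.2.2
    exact claim a hr ha
  have hpick : ∀ F, F ∈ H → wv ∈ F → ∃ C, C ∈ hyperComps G' (F \ {wv}) := by
    intro F hF hwF
    obtain ⟨a, b, ha, hb, hab⟩ := (Set.one_lt_ncard_iff (Set.toFinite _)).mp (P3 F hF)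
    have hz : ∃ z ∈ F, z ≠ wv := by
      by_cases haw : a = wv
      · exact ⟨b, hb, fun h => hab (haw.trans h.symm)⟩
      · exact ⟨a, ha, haw⟩
    obtain ⟨z, hzF, hzw⟩ := hz
    obtain ⟨C, hC, -⟩ := mem_hyperComps_self (G := G') (F := F \ {wv}) ⟨hzF, hzw⟩
    exact ⟨C, hC⟩
  have hkey2 : ∀ F ∈ H, ∀ F' ∈ H, F ≠ F' → wv ∈ F → wv ∈ F' →
      ∀ C ∈ hyperComps G' (F \ {wv}), ∀ C' ∈ hyperComps G' (F' \ {wv}),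
      C ∪ {wv} ≠ C' ∪ {wv} := by
    intro F hF F' hF' hne hwF hwF' C hC C' hC' heq
    obtain ⟨z, hzC⟩ := hyperComps_nonempty hC
    have hz := hyperComps_subset hC hzC
    have hzC' : z ∈ C' := by
      have h1 : z ∈ C' ∪ {wv} := heq ▸ (Or.inl hzC : z ∈ C ∪ {wv})
      rcases h1 with h | h
      · exact h
      · exact absurd (Set.mem_singleton_iff.mp h) hz.2
    have hz' := hyperComps_subset hC' hzC'
    exact hz.2 (P4 F hF F' hF' hne z wv hz.1 hz'.1 hwF hwF')
  have nccH : ncc (hyperGraphOf H) = ncc G :=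
    ncc_hyper_eq (fun F hF u hu v hv => (P1 F hF u hu v hv).reachable) P2
  have hInvS : HInv G' (hstep G' e wv H) := by
    simp only [hstep]
    rw [hedge]
    exact vertexOp_inv hInv'
  have nccS : ncc (hyperGraphOf (hstep G' e wv H)) = ncc G' :=
    ncc_hyper_eq (fun F hF u hu v hv => (hInvS.1 F hF u hu v hv).reachable) hInvS.2.1
  by_cases hxyR : RIn G' F₀ x y
  · -- CASE 1 : F₀ stays connected in G'
    have patch : ∀ u v, RIn G F₀ u v → RIn G' F₀ u v := by
      intro u v h
      induction h with
      | refl => exact RIn.refl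
      | @tail b c hr h ih =>
        rcases hadj b c h.1 with h' | ⟨rfl, rfl⟩ | ⟨rfl, rfl⟩
        · exact ih.tail ⟨h', h.2.1, h.2.2⟩
        · exact Relation.ReflTransGen.trans ih hxyR
        · exact Relation.ReflTransGen.trans ih hxyR.symm
    have hF₀conn : ∀ u ∈ F₀, ∀ v ∈ F₀, RIn G' F₀ u v := fun u hu v hv =>
      patch u v (P1 F₀ hF₀ u hu v hv)
    have hcomps1 : hyperComps G' F₀ = {F₀} := hyperComps_of_conn hF₀ne hF₀conn
    have hK1 : K = {F₀} := by
      rw [hKdef, hcomps1]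
      ext C
      simp only [Set.mem_setOf_eq, Set.mem_singleton_iff]
      constructor
      · rintro ⟨h, -⟩; exact h
      · rintro rfl; exact ⟨rfl, by omega⟩
    have hH'1 : (H \ {F₀}) ∪ K = H := by
      rw [hK1]
      ext D
      simp only [Set.mem_union, Set.mem_diff, Set.mem_singleton_iff]
      constructor
      · rintro (⟨h, -⟩ | rfl)
        · exact h
        · exact hF₀
      · intro h
        by_cases hD : D = F₀
        · exact Or.inr hD
        · exact Or.inl ⟨h, hD⟩
    have hSdef : hstep G' e wv H = vertexOp G' wv H := by
      simp only [hstep]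
      rw [hedge, hH'1]
    have hwF₀ : wv ∈ F₀ := hcrossw F₀ x y hx1 hy2 hxyR
    have hxw : x ≠ wv := fun h => hw1 (h ▸ hx1)
    have hyw : y ≠ wv := fun h => hw2 (h ▸ hy2)
    obtain ⟨Cx, hCx, hxCx⟩ := mem_hyperComps_self (G := G') (F := F₀ \ {wv}) ⟨hxF₀, hxw⟩
    obtain ⟨Cy, hCy, hyCy⟩ := mem_hyperComps_self (G := G') (F := F₀ \ {wv}) ⟨hyF₀, hyw⟩
    have hCxCy : Cx ≠ Cy := by
      intro hEq
      have hrin := (mem_comp_iff hCx hxCx ⟨hyF₀, hyw⟩).mp (hEq ▸ hyCy)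
      exact (hcrossw (F₀ \ {wv}) x y hx1 hy2 hrin).2 rfl
    set ψ : Set V → Set V := fun F =>
      if F = F₀ then Cx ∪ {wv}
      else if h : F ∈ H ∧ wv ∈ F then (hpick F h.1 h.2).choose ∪ {wv}
      else F with hψ
    have hψF₀ : ψ F₀ = Cx ∪ {wv} := by rw [hψ]; exact if_pos rfl
    have hψtouch : ∀ F (hne : F ≠ F₀) (h : F ∈ H ∧ wv ∈ F),
        ψ F = (hpick F h.1 h.2).choose ∪ {wv} := by
      intro F hne h; rw [hψ]; exact (if_neg hne).trans (dif_pos h)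
    have hψuntouch : ∀ F, F ≠ F₀ → ¬(F ∈ H ∧ wv ∈ F) → ψ F = F := by
      intro F hne h; rw [hψ]; exact (if_neg hne).trans (dif_neg h)
    have hmemS : ∀ F ∈ H, ψ F ∈ vertexOp G' wv H := by
      intro F hF
      by_cases hFe : F = F₀
      · rw [hFe, hψF₀]
        exact mem_vertexOp_iff.mpr (Or.inr ⟨F₀, ⟨hF₀, hwF₀⟩, Cx, hCx, rfl⟩)
      · by_cases hFw : F ∈ H ∧ wv ∈ F
        · rw [hψtouch F hFe hFw]
          exact mem_vertexOp_iff.mpr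
            (Or.inr ⟨F, hFw, _, (hpick F hFw.1 hFw.2).choose_spec, rfl⟩)
        · have hwF : wv ∉ F := fun h => hFw ⟨hF, h⟩
          rw [hψuntouch F hFe hFw]
          exact mem_vertexOp_iff.mpr (Or.inl ⟨hF, hwF⟩)
    have hinj : Set.InjOn ψ H := by
      intro F hF F' hF' heq
      by_contra hne
      by_cases hFe : F = F₀ <;> by_cases hFe' : F' = F₀
      · exact hne (hFe.trans hFe'.symm)
      · rw [hFe, hψF₀] at heq
        by_cases hFw' : F' ∈ H ∧ wv ∈ F'
        · rw [hψtouch F' hFe' hFw'] at heq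
          exact hkey2 F₀ hF₀ F' hF' (fun h => hFe' h.symm) hwF₀ hFw'.2 Cx hCx _
            (hpick F' hFw'.1 hFw'.2).choose_spec heq
        · rw [hψuntouch F' hFe' hFw'] at heq
          have hwvF' : wv ∈ F' := by rw [← heq]; exact Or.inr rfl
          exact hFw' ⟨hF', hwvF'⟩
      · rw [hFe', hψF₀] at heq
        by_cases hFw : F ∈ H ∧ wv ∈ F
        · rw [hψtouch F hFe hFw] at heq
          exact hkey2 F hF F₀ hF₀ hFe hFw.2 hwF₀ _
            (hpick F hFw.1 hFw.2).choose_spec Cx hCx heq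
        · rw [hψuntouch F hFe hFw] at heq
          have hwvF : wv ∈ F := by rw [heq]; exact Or.inr rfl
          exact hFw ⟨hF, hwvF⟩
      · by_cases hFw : F ∈ H ∧ wv ∈ F <;> by_cases hFw' : F' ∈ H ∧ wv ∈ F'
        · rw [hψtouch F hFe hFw, hψtouch F' hFe' hFw'] at heq
          exact hkey2 F hF F' hF' hne hFw.2 hFw'.2 _
            (hpick F hFw.1 hFw.2).choose_spec _
            (hpick F' hFw'.1 hFw'.2).choose_spec heq
        · rw [hψtouch F hFe hFw, hψuntouch F' hFe' hFw'] at heq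
          have hwvF' : wv ∈ F' := by rw [← heq]; exact Or.inr rfl
          exact hFw' ⟨hF', hwvF'⟩
        · rw [hψuntouch F hFe hFw, hψtouch F' hFe' hFw'] at heq
          have hwvF : wv ∈ F := by rw [heq]; exact Or.inr rfl
          exact hFw ⟨hF, hwvF⟩
        · rw [hψuntouch F hFe hFw, hψuntouch F' hFe' hFw'] at heq
          exact hne heq
    have hCwv : ∀ C, C ∈ hyperComps G' (F₀ \ {wv}) → wv ∉ C :=
      fun C hC h => (hyperComps_subset hC h).2 rfl
    have hextra : Cy ∪ {wv} ∈ vertexOp G' wv H :=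
      mem_vertexOp_iff.mpr (Or.inr ⟨F₀, ⟨hF₀, hwF₀⟩, Cy, hCy, rfl⟩)
    have hnotim : Cy ∪ {wv} ∉ ψ '' H := by
      rintro ⟨F, hF, hFeq⟩
      by_cases hFe : F = F₀
      · rw [hFe, hψF₀] at hFeq
        apply hCxCy
        ext z
        constructor
        · intro hz
          have h1 : z ∈ Cy ∪ {wv} := hFeq ▸ (Or.inl hz : z ∈ Cx ∪ {wv})
          rcases h1 with h | h
          · exact h
          · exact absurd ((Set.mem_singleton_iff.mp h) ▸ hz) (hCwv Cx hCx)
        · intro hz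
          have h1 : z ∈ Cx ∪ {wv} := by rw [hFeq]; exact Or.inl hz
          rcases h1 with h | h
          · exact h
          · exact absurd ((Set.mem_singleton_iff.mp h) ▸ hz) (hCwv Cy hCy)
      · by_cases hFw : F ∈ H ∧ wv ∈ F
        · rw [hψtouch F hFe hFw] at hFeq
          exact hkey2 F hF F₀ hF₀ hFe hFw.2 hwF₀ _
            (hpick F hFw.1 hFw.2).choose_spec Cy hCy hFeq
        · rw [hψuntouch F hFe hFw] at hFeq
          have hwvF : wv ∈ F := by rw [hFeq]; exact Or.inr rfl
          exact hFw ⟨hF, hwvF⟩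
    have hsub3 : insert (Cy ∪ {wv}) (ψ '' H) ⊆ vertexOp G' wv H := by
      rw [Set.insert_subset_iff]
      refine ⟨hextra, ?_⟩
      rintro D ⟨F, hF, rfl⟩
      exact hmemS F hF
    have hcount : H.ncard + 1 ≤ (hstep G' e wv H).ncard := by
      rw [hSdef]
      have h1 : (insert (Cy ∪ {wv}) (ψ '' H)).ncard = (ψ '' H).ncard + 1 :=
        Set.ncard_insert_of_notMem hnotim (Set.toFinite _)
      have h2 : (ψ '' H).ncard = H.ncard := Set.ncard_image_of_injOn hinj
      have h3 := Set.ncard_le_ncard hsub3 (Set.toFinite _)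
      omega
    have nccGG : ncc G = ncc G' := ncc_congr (reach_iff_of_del hsub hadj hxyR.reachable)
    have hWS : Wt (hstep G' e wv H) ≤ Wt H := by
      rw [hSdef]
      exact Wt_vertexOp_le _ _ _
    refine ⟨hInvS, ?_, Or.inl ⟨hcount, by rw [nccS, nccH, nccGG]⟩⟩
    rw [nccS, ← nccGG, ← nccH]
    omega
  · -- CASE 2 : F₀ splits
    obtain ⟨Cx, hCx, hxCx⟩ := mem_hyperComps_self (G := G') (F := F₀) hxF₀
    obtain ⟨Cy, hCy, hyCy⟩ := mem_hyperComps_self (G := G') (F := F₀) hyF₀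
    have hCxCy : Cx ≠ Cy := fun h => hxyR ((mem_comp_iff hCx hxCx hyF₀).mp (h ▸ hyCy))
    -- weight drop of the edge operation
    have hWH' : Wt ((H \ {F₀}) ∪ K) + 1 ≤ Wt H := by
      have h1 : Wt ((H \ {F₀}) ∪ K) ≤ Wt (H \ {F₀}) + Wt K := Wt_union_le _ _
      have h2 : Wt H = Wt (H \ {F₀}) + (F₀.ncard - 1) := Wt_diff_singleton hF₀
      have h3 : Wt K ≤ Wt (hyperComps G' F₀) := Wt_le_of_subset (fun C hC => hC.1)
      have h4 : Wt (hyperComps G' F₀) + 2 ≤ F₀.ncard := by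
        set S' := (Set.toFinite (hyperComps G' F₀)).toFinset with hS'
        have hcoe : hyperComps G' F₀ = (S' : Set (Set V)) :=
          (Set.Finite.coe_toFinset _).symm
        have hdisjc : ∀ C ∈ S', ∀ D ∈ S', C ≠ D → Disjoint C D := by
          intro C hC D hD hne
          rw [Set.Finite.mem_toFinset] at hC hD
          rw [Set.disjoint_left]
          intro a haC haD
          exact hne (hyperComps_eq_of_mem hC hD haC haD)
        have hsum : (⋃ C ∈ (S' : Set (Set V)), C).ncard = ∑ C ∈ S', C.ncard :=
          ncard_biUnion_eq S' hdisjc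
        have hsub4 : (⋃ C ∈ (S' : Set (Set V)), C) ⊆ F₀ := by
          intro z hz
          simp only [Set.mem_iUnion] at hz
          obtain ⟨C, hC, hzC⟩ := hz
          rw [← hcoe] at hC
          exact hyperComps_subset hC hzC
        have h5 : ∑ C ∈ S', C.ncard ≤ F₀.ncard := by
          rw [← hsum]
          exact Set.ncard_le_ncard hsub4 (Set.toFinite _)
        have hcard2 : 2 ≤ S'.card := by
          have hpair : ({Cx, Cy} : Finset (Set V)) ⊆ S' := by
            intro C hC
            rw [Set.Finite.mem_toFinset]
            rcases Finset.mem_insert.mp hC with rfl | hC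
            · exact hCx
            · rw [Finset.mem_singleton.mp hC]
              exact hCy
          have := Finset.card_le_card hpair
          rwa [Finset.card_pair hCxCy] at this
        have hone : ∀ C ∈ S', 1 ≤ C.ncard := by
          intro C hC
          rw [Set.Finite.mem_toFinset] at hC
          exact (Set.ncard_pos (Set.toFinite _)).mpr (hyperComps_nonempty hC)
        have h6 : Wt (hyperComps G' F₀) + S'.card = ∑ C ∈ S', C.ncard := by
          rw [Wt, Finset.card_eq_sum_ones, ← Finset.sum_add_distrib]
          exact Finset.sum_congr rfl fun C hC => by have := hone C hC; omega
        omega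
      omega
    -- x and y cannot stay connected, else counting fails
    have hnr : ¬ G'.Reachable x y := by
      intro hr
      have nccGG : ncc G = ncc G' := ncc_congr (reach_iff_of_del hsub hadj hr)
      have hWS : Wt (hstep G' e wv H) ≤ Wt ((H \ {F₀}) ∪ K) := by
        simp only [hstep]
        rw [hedge]
        exact Wt_vertexOp_le _ _ _
      have hA := card_le_Wt_add_ncc (hstep G' e wv H)
      omega
    have hncc21 : ncc G + 1 ≤ ncc G' := ncc_add_one_le_of hsub hxy hnr
    have hncc22 : ncc G' + 1 ≤ ncc G + 2 := by
      have hk := ncc_key (G := G') (G'' := G) (F := ({x, y} : Set V))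
        ⟨x, Or.inl rfl⟩ hsub ?_ ?_
      · rwa [Set.ncard_pair hxyne] at hk
      · intro u v h
        rcases hadj u v h with h' | ⟨rfl, rfl⟩ | ⟨rfl, rfl⟩
        · exact Or.inl h'
        · exact Or.inr ⟨Or.inl rfl, Or.inr rfl⟩
        · exact Or.inr ⟨Or.inr rfl, Or.inl rfl⟩
      · intro u hu v hv
        rcases hu with rfl | hu <;> rcases hv with rfl | hv
        · exact SimpleGraph.Reachable.refl _
        · rw [Set.mem_singleton_iff.mp hv]
          exact hxy.reachable
        · rw [Set.mem_singleton_iff.mp hu]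
          exact hxy.reachable.symm
        · rw [Set.mem_singleton_iff.mp hu, Set.mem_singleton_iff.mp hv]
    have hnccG : ncc G' = ncc G + 1 := by omega
    -- injection from H \ {F₀} into the new hypergraph
    set ψ : Set V → Set V := fun F =>
      if h : F ∈ H ∧ wv ∈ F then (hpick F h.1 h.2).choose ∪ {wv}
      else F with hψ
    have hψtouch : ∀ F (h : F ∈ H ∧ wv ∈ F),
        ψ F = (hpick F h.1 h.2).choose ∪ {wv} := by
      intro F h; rw [hψ]; exact dif_pos h
    have hψuntouch : ∀ F, ¬(F ∈ H ∧ wv ∈ F) → ψ F = F := by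
      intro F h; rw [hψ]; exact dif_neg h
    have hmemS : ∀ F ∈ H \ {F₀}, ψ F ∈ vertexOp G' wv ((H \ {F₀}) ∪ K) := by
      intro F hF
      by_cases hFw : F ∈ H ∧ wv ∈ F
      · rw [hψtouch F hFw]
        exact mem_vertexOp_iff.mpr (Or.inr ⟨F, ⟨Or.inl hF, hFw.2⟩, _,
          (hpick F hFw.1 hFw.2).choose_spec, rfl⟩)
      · have hwF : wv ∉ F := fun h => hFw ⟨hF.1, h⟩
        rw [hψuntouch F hFw]
        exact mem_vertexOp_iff.mpr (Or.inl ⟨Or.inl hF, hwF⟩)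
    have hinj : Set.InjOn ψ (H \ {F₀}) := by
      intro F hF F' hF' heq
      by_contra hne
      by_cases hFw : F ∈ H ∧ wv ∈ F <;> by_cases hFw' : F' ∈ H ∧ wv ∈ F'
      · rw [hψtouch F hFw, hψtouch F' hFw'] at heq
        exact hkey2 F hF.1 F' hF'.1 hne hFw.2 hFw'.2 _
          (hpick F hFw.1 hFw.2).choose_spec _
          (hpick F' hFw'.1 hFw'.2).choose_spec heq
      · rw [hψtouch F hFw, hψuntouch F' hFw'] at heq
        have hwvF' : wv ∈ F' := by rw [← heq]; exact Or.inr rfl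
        exact hFw' ⟨hF'.1, hwvF'⟩
      · rw [hψuntouch F hFw, hψtouch F' hFw'] at heq
        have hwvF : wv ∈ F := by rw [heq]; exact Or.inr rfl
        exact hFw ⟨hF.1, hwvF⟩
      · rw [hψuntouch F hFw, hψuntouch F' hFw'] at heq
        exact hne heq
    have hcount : H.ncard ≤ (hstep G' e wv H).ncard + 1 := by
      have himg : ψ '' (H \ {F₀}) ⊆ hstep G' e wv H := by
        rintro D ⟨F, hF, rfl⟩
        simp only [hstep]
        rw [hedge]
        exact hmemS F hF
      have h1 : (ψ '' (H \ {F₀})).ncard = (H \ {F₀}).ncard :=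
        Set.ncard_image_of_injOn hinj
      have h2 := Set.ncard_le_ncard himg (Set.toFinite _)
      have h3 : (H \ {F₀}).ncard = H.ncard - 1 :=
        Set.ncard_diff_singleton_of_mem hF₀
      have h4 : 1 ≤ H.ncard :=
        (Set.ncard_pos (Set.toFinite _)).mpr ⟨F₀, hF₀⟩
      omega
    have hWS : Wt (hstep G' e wv H) ≤ Wt ((H \ {F₀}) ∪ K) := by
      simp only [hstep]
      rw [hedge]
      exact Wt_vertexOp_le _ _ _
    refine ⟨hInvS, ?_, Or.inr ⟨hcount, by rw [nccS, nccH, hnccG]⟩⟩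
    rw [nccS, hnccG, ← nccH]
    omega



end Step

theorem semiInvariant_increases (s t : ℕ) (hs : 1 ≤ s) (ht : 1 ≤ t)
    (m : ℕ) (c : ℕ → SimpleGraph (Fin (s + t + 1)))
    (e : ℕ → Sym2 (Fin (s + t + 1))) (w : ℕ → Fin (s + t + 1))
    (hend : c m = ⊥)
    (hproc : ∀ i < m, e i ∈ (c i).edgeSet ∧
      (c (i + 1)).edgeSet = (c i).edgeSet \ {e i} ∧
      ∃ V1 V2 : Set (Fin (s + t + 1)),
        Disjoint V1 V2 ∧ w i ∉ V1 ∧ w i ∉ V2 ∧ V1 ∪ V2 ∪ {w i} = Set.univ ∧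
        V1.ncard = s ∧ V2.ncard = t ∧
        (∃ x ∈ V1, ∃ y ∈ V2, e i = s(x, y)) ∧
        ∀ x ∈ V1, ∀ y ∈ V2, (c i).Adj x y → s(x, y) = e i)
    (H : ℕ → Set (Set (Fin (s + t + 1))))
    (hH0 : H 0 = initialHyper (c 0))
    (hHstep : ∀ i < m, H (i + 1) = hstep (c (i + 1)) (e i) (w i) (H i))
    (f cc : ℕ → ℕ)
    (hf : ∀ i, f i = (H i).ncard)
    (hcc : ∀ i, cc i = Nat.card (hyperGraphOf (H i)).ConnectedComponent) :
    ∀ i < m,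
      f (i + 1) + 2 * cc (i + 1) ≥ f i + 2 * cc i + 1 ∧
      ∃ (lam : ℕ) (v : ℤ × ℤ),
        v ∈ ({(1, 0), (1, 1), (0, 1), (-1, 1)} : Set (ℤ × ℤ)) ∧
        (f (i + 1) : ℤ) = (f i : ℤ) + v.1 + lam ∧
        (cc (i + 1) : ℤ) = (cc i : ℤ) + v.2 := by
  classical
  have key : ∀ j, j < m →
      (HInv (c j) (H j) ∧
        Wt (H j) + ncc (hyperGraphOf (H j)) ≤ Fintype.card (Fin (s + t + 1))) →
      ((HInv (c (j + 1)) (H (j + 1)) ∧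
        Wt (H (j + 1)) + ncc (hyperGraphOf (H (j + 1))) ≤
          Fintype.card (Fin (s + t + 1))) ∧
        (((H (j + 1)).ncard ≥ (H j).ncard + 1 ∧
            ncc (hyperGraphOf (H (j + 1))) = ncc (hyperGraphOf (H j))) ∨
          ((H j).ncard ≤ (H (j + 1)).ncard + 1 ∧
            ncc (hyperGraphOf (H (j + 1))) = ncc (hyperGraphOf (H j)) + 1))) := by
    intro j hjm ⟨hInvj, hWj⟩
    obtain ⟨hein, hE, V1, V2, hd, hw1, hw2, hcov, hV1c, hV2c,
      ⟨xx, hx1, yy, hy2, hexy⟩, hlast⟩ := hproc j hjm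
    have hxy : (c j).Adj xx yy := (SimpleGraph.mem_edgeSet _).mp (hexy ▸ hein)
    have hsub : c (j + 1) ≤ c j := by
      rw [← SimpleGraph.edgeSet_subset_edgeSet, hE]
      exact Set.diff_subset
    have hadj : ∀ u v, (c j).Adj u v →
        (c (j + 1)).Adj u v ∨ ((u = xx ∧ v = yy) ∨ (u = yy ∧ v = xx)) := by
      intro u v h
      by_cases hne : s(u, v) = e j
      · right
        rw [hexy] at hne
        exact Sym2.eq_iff.mp hne
      · left
        rw [← SimpleGraph.mem_edgeSet (c (j + 1)), hE]
        exact ⟨(SimpleGraph.mem_edgeSet _).mpr h, hne⟩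
    have hcross : ∀ a ∈ V1, ∀ b ∈ V2, ¬ (c (j + 1)).Adj a b := by
      intro a ha b hb hab
      have h1 : s(a, b) ∈ (c (j + 1)).edgeSet := (SimpleGraph.mem_edgeSet _).mpr hab
      rw [hE] at h1
      exact h1.2 (hlast a ha b hb ((SimpleGraph.mem_edgeSet _).mp h1.1))
    have hcover' : ∀ z, z ∈ V1 ∨ z ∈ V2 ∨ z = w j := by
      intro z
      have hz : z ∈ V1 ∪ V2 ∪ {w j} := by rw [hcov]; trivial
      rcases hz with (h | h) | h
      · exact Or.inl h
      · exact Or.inr (Or.inl h)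
      · exact Or.inr (Or.inr h)
    have hstep' := step_main hInvj hWj hxy hexy hsub hadj hd hw1 hw2 hcover'
      hx1 hy2 hcross
    rw [← hHstep j hjm] at hstep'
    exact ⟨⟨hstep'.1, hstep'.2.1⟩, hstep'.2.2⟩
  have good : ∀ j, j ≤ m → HInv (c j) (H j) ∧
      Wt (H j) + ncc (hyperGraphOf (H j)) ≤ Fintype.card (Fin (s + t + 1)) := by
    intro j
    induction j with
    | zero =>
      intro _
      rw [hH0]
      refine ⟨⟨initial_P1 _, initial_P2 _, fun F hF => hF.2, initial_P4 _⟩, ?_⟩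
      have h1 := Wt_initial_le (c 0)
      have heq : ncc (hyperGraphOf (initialHyper (c 0))) = ncc (c 0) :=
        ncc_hyper_eq (fun F hF u hu v hv => (initial_P1 _ F hF u hu v hv).reachable)
          (initial_P2 _)
      omega
    | succ j ih =>
      intro hj1
      have hjm : j < m := lt_of_lt_of_le (Nat.lt_succ_self j) hj1
      exact (key j hjm (ih (le_of_lt hjm))).1
  intro i him
  obtain ⟨-, hC⟩ := key i him (good i (le_of_lt him))
  have hfi : f i = (H i).ncard := hf i
  have hfi1 : f (i + 1) = (H (i + 1)).ncard := hf (i + 1)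
  have hcci : cc i = ncc (hyperGraphOf (H i)) := hcc i
  have hcci1 : cc (i + 1) = ncc (hyperGraphOf (H (i + 1))) := hcc (i + 1)
  rcases hC with ⟨h1, h2⟩ | ⟨h1, h2⟩
  · refine ⟨by omega, f (i + 1) - (f i + 1), (1, 0), by simp, ?_, ?_⟩
    · show (f (i + 1) : ℤ) = (f i : ℤ) + 1 + ((f (i + 1) - (f i + 1) : ℕ) : ℤ)
      omega
    · show (cc (i + 1) : ℤ) = (cc i : ℤ) + 0
      omega
  · refine ⟨by omega, f (i + 1) + 1 - f i, (-1, 1), by simp, ?_, ?_⟩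
    · show (f (i + 1) : ℤ) = (f i : ℤ) + (-1) + ((f (i + 1) + 1 - f i : ℕ) : ℤ)
      omega
    · show (cc (i + 1) : ℤ) = (cc i : ℤ) + 1
      omega
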